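/- Let r ≥ 1 and s ≥ 2 be integers. Every r×r permutation matrix over ℤ_s can be expressed as a product of at most ⌊3r/2⌋ toggle matrices over ℤ_s. -/

import Mathlib

/-- The `t`-toggle matrix over `ℤ_s`: obtained from `I_r` by replacing row `t` by the
row all of whose entries are `-1`. -/
def toggleMat (r s : ℕ) (t : Fin r) : Matrix (Fin r) (Fin r) (ZMod s) :=
  Matrix.of fun i j => if i = t then -1 else if i = j then 1 else 0

/-- A toggle matrix is a `t`-toggle matrix for some `t`. -/
def IsToggleMat (r s : ℕ) (T : Matrix (Fin r) (Fin r) (ZMod s)) : Prop :=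
  ∃ t : Fin r, T = toggleMat r s t

set_option maxHeartbeats 1000000

namespace ToggleAux

open Equiv Equiv.Perm List

variable (r s : ℕ)

/-- The permutation matrix of `σ`. -/
def permMat (σ : Equiv.Perm (Fin r)) : Matrix (Fin r) (Fin r) (ZMod s) :=
  Matrix.of fun i j => if σ j = i then 1 else 0

lemma permMat_one : permMat r s 1 = 1 := by
  ext i j
  simp [permMat, Matrix.one_apply, eq_comm]

lemma permMat_mul (σ τ : Equiv.Perm (Fin r)) :
    permMat r s (σ * τ) = permMat r s σ * permMat r s τ := by
  ext i j
  rw [Matrix.mul_apply, Finset.sum_eq_single (τ j)]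
  · simp [permMat]
    exact if_congr Iff.rfl rfl rfl
  · intro k _ hk
    have : τ j ≠ k := fun h => hk h.symm
    simp [permMat, this]
  · simp

lemma toggle_mul (t : Fin r) (A : Matrix (Fin r) (Fin r) (ZMod s)) (i j : Fin r) :
    (toggleMat r s t * A) i j = if i = t then -∑ k, A k j else A i j := by
  rw [Matrix.mul_apply]
  by_cases h : i = t
  · simp [toggleMat, h, neg_mul, Finset.sum_neg_distrib]
  · simp [toggleMat, h, ite_mul, Finset.sum_ite_eq]

lemma mul_toggle (A : Matrix (Fin r) (Fin r) (ZMod s)) (t : Fin r) (i j : Fin r) :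
    (A * toggleMat r s t) i j = -A i t + if j = t then 0 else A i j := by
  rw [Matrix.mul_apply]
  have hsum : ∀ k, A i k * toggleMat r s t k j =
      (if t = k then -A i t else 0) +
      (if j = k then (if j = t then 0 else A i j) else 0) := by
    intro k
    by_cases h1 : k = t <;> by_cases h2 : k = j
    · subst h1; subst h2; simp [toggleMat]
    · subst h1; simp [toggleMat, h2, Ne.symm h2]
    · subst h2; simp [toggleMat, h1, Ne.symm h1]
    · simp [toggleMat, h1, h2, Ne.symm h1, Ne.symm h2]
  rw [Finset.sum_congr rfl (fun k _ => hsum k), Finset.sum_add_distrib,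
    Finset.sum_ite_eq, Finset.sum_ite_eq]
  simp

/-- The partial product matrix of the toggles along a list. -/
def cyc (a : Fin r) (l : List (Fin r)) : Matrix (Fin r) (Fin r) (ZMod s) :=
  Matrix.of fun i j =>
    if i = (a :: l).getLast (List.cons_ne_nil a l) then -1
    else if ((a :: l).formPerm)⁻¹ j = i then 1 else 0

lemma cyc_colsum (a : Fin r) (l : List (Fin r)) (j : Fin r) :
    ∑ k, cyc r s a l k j = if j = a then -1 else 0 := by
  set L := (a :: l).getLast (List.cons_ne_nil a l) with hL
  set π := (a :: l).formPerm with hπ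
  have hsum : ∀ k, cyc r s a l k j =
      (if L = k then (-1 - (if π⁻¹ j = k then 1 else 0)) else 0) +
      (if π⁻¹ j = k then 1 else 0) := by
    intro k
    by_cases h : k = L
    · subst h; simp [cyc, ← hL, ← hπ]
    · simp [cyc, ← hL, ← hπ, h, Ne.symm h]
  rw [Finset.sum_congr rfl (fun k _ => hsum k), Finset.sum_add_distrib,
    Finset.sum_ite_eq, Finset.sum_ite_eq]
  have hπL : π L = a := List.formPerm_apply_getLast a l
  have hiff : π⁻¹ j = L ↔ j = a := by
    rw [Equiv.Perm.inv_eq_iff_eq, hπL]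
  by_cases hj : j = a
  · rw [if_pos (hiff.mpr hj), if_pos hj]
    simp
  · rw [if_neg (fun h => hj (hiff.mp h)), if_neg hj]
    simp

lemma toggle_prod (a : Fin r) (l : List (Fin r)) (hn : (a :: l).Nodup) :
    ((a :: l).map (toggleMat r s)).prod = cyc r s a l := by
  induction l generalizing a with
  | nil =>
    ext i j
    simp only [List.map_cons, List.map_nil, List.prod_cons, List.prod_nil, mul_one]
    simp [cyc, toggleMat, eq_comm]
  | cons b m IH =>
    have hn' : (b :: m).Nodup := hn.of_cons
    have ha : a ∉ b :: m := by
      have := hn; rw [List.nodup_cons] at this; exact this.1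
    rw [List.map_cons, List.prod_cons, IH b hn']
    ext i j
    rw [toggle_mul]
    set L := (b :: m).getLast (List.cons_ne_nil b m) with hL
    set π := (b :: m).formPerm with hπ
    have hLmem : L ∈ b :: m := List.getLast_mem _
    have hLa : L ≠ a := fun h => ha (h ▸ hLmem)
    have hlast : (a :: b :: m).getLast (List.cons_ne_nil _ _) = L := by
      rw [List.getLast_cons (List.cons_ne_nil b m)]
    have hπ' : (a :: b :: m).formPerm = Equiv.swap a b * π := by
      rw [hπ]; exact List.formPerm_cons_cons a b m
    by_cases h : i = a
    · rw [if_pos h, cyc_colsum, h]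
      -- target row a of cyc a (b::m)
      have hne : a ≠ (a :: b :: m).getLast (List.cons_ne_nil _ _) := by
        rw [hlast]; exact fun h => hLa h.symm
      have hab : (a :: b :: m).formPerm a = b :=
        List.formPerm_apply_head a b m hn
      have hiff : ((a :: b :: m).formPerm)⁻¹ j = a ↔ j = b := by
        rw [Equiv.Perm.inv_eq_iff_eq, hab]
      simp only [cyc, Matrix.of_apply, if_neg hne]
      by_cases hj : j = b
      · rw [if_pos hj, if_pos (hiff.mpr hj)]; simp
      · rw [if_neg hj, if_neg (fun hh => hj (hiff.mp hh))]; simp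
    · rw [if_neg h]
      simp only [cyc, Matrix.of_apply, hlast, ← hL, ← hπ]
      by_cases hiL : i = L
      · rw [if_pos hiL, if_pos hiL]
      · rw [if_neg hiL, if_neg hiL]
        -- show the two permutation conditions agree
        have hπi : (a :: b :: m).formPerm i = π i := by
          rw [hπ', Equiv.Perm.mul_apply]
          have h1 : π i ≠ a := by
            by_cases hi : i ∈ b :: m
            · intro hc
              exact ha (hc ▸ List.formPerm_apply_mem_of_mem hi)
            · rw [hπ, List.formPerm_apply_of_notMem hi]
              exact h
          have h2 : π i ≠ b := by
            intro hc
            have := (List.formPerm_eq_head_iff_eq_getLast m i b).mp hc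
            exact hiL (this.trans hL.symm)
          exact Equiv.swap_apply_of_ne_of_ne h1 h2
        have hiff : ((a :: b :: m).formPerm)⁻¹ j = i ↔ π⁻¹ j = i := by
          rw [Equiv.Perm.inv_eq_iff_eq, Equiv.Perm.inv_eq_iff_eq, hπi]
        by_cases hc : π⁻¹ j = i
        · rw [if_pos hc, if_pos (hiff.mpr hc)]
        · rw [if_neg hc, if_neg (fun hh => hc (hiff.mp hh))]

lemma full_cycle (a : Fin r) (l : List (Fin r)) (hn : (a :: l).Nodup) :
    (((a :: l) ++ [a]).map (toggleMat r s)).prod = permMat r s ((a :: l).formPerm)⁻¹ := by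
  rw [List.map_append, List.prod_append, toggle_prod r s a l hn]
  simp only [List.map_cons, List.map_nil, List.prod_cons, List.prod_nil, mul_one]
  ext i j
  rw [mul_toggle]
  set L := (a :: l).getLast (List.cons_ne_nil a l) with hL
  set π := (a :: l).formPerm with hπ
  have hπL : π L = a := List.formPerm_apply_getLast a l
  have hπinva : π⁻¹ a = L := by rw [Equiv.Perm.inv_eq_iff_eq, hπL]
  have hcyca : ∀ i, cyc r s a l i a = if i = L then -1 else 0 := by
    intro i
    by_cases h : i = L
    · simp [cyc, ← hL, ← hπ, h]
    · simp [cyc, ← hL, ← hπ, h, hπinva, Ne.symm h]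
      intro hh; exact absurd (hπinva.symm.trans hh) (Ne.symm h)
  simp only [permMat, Matrix.of_apply]
  by_cases h : i = L
  · subst h
    rw [hcyca, if_pos rfl]
    have hiff : π⁻¹ j = L ↔ j = a := by rw [Equiv.Perm.inv_eq_iff_eq, hπL]
    by_cases hj : j = a
    · rw [if_pos hj, if_pos (hiff.mpr hj)]; simp
    · rw [if_neg hj, if_neg (fun hh => hj (hiff.mp hh))]
      simp [cyc, ← hL, ← hπ]
  · rw [hcyca, if_neg h, neg_zero, zero_add]
    by_cases hj : j = a
    · rw [if_pos hj, hj, if_neg (fun hh : π⁻¹ a = i => h (hh.symm.trans hπinva))]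
    · rw [if_neg hj]
      simp [cyc, ← hL, ← hπ, h]

lemma exists_cycle_list (σ : Equiv.Perm (Fin r)) (a : Fin r) (ha : σ a ≠ a) :
    ∃ M : List (Matrix (Fin r) (Fin r) (ZMod s)),
      M.length = (σ.cycleOf a).support.card + 1 ∧
      (∀ T ∈ M, IsToggleMat r s T) ∧ M.prod = permMat r s (σ.cycleOf a) := by
  classical
  have hnodup : (σ⁻¹.toList a).Nodup := Equiv.Perm.nodup_toList σ⁻¹ a
  have hcongr : (σ.cycleOf a)⁻¹ = (σ⁻¹.toList a).formPerm := by
    rw [Equiv.Perm.cycleOf_inv, Equiv.Perm.formPerm_toList σ⁻¹ a]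
    congr!
  have hinv : ((σ⁻¹.toList a).formPerm)⁻¹ = σ.cycleOf a := by
    rw [← hcongr, inv_inv]
  have hmem : a ∈ σ⁻¹.support := by
    rw [Equiv.Perm.support_inv]
    exact Equiv.Perm.mem_support.mpr ha
  have h2len : 2 ≤ (σ⁻¹.toList a).length :=
    Equiv.Perm.two_le_length_toList_iff_mem_support.mpr hmem
  have hne : ∀ x : Fin r, σ⁻¹.toList a ≠ [x] := by
    intro x hx
    rw [hx] at h2len
    simp at h2len
  have hlen : (σ⁻¹.toList a).length = (σ.cycleOf a).support.card := by
    have h1 : ((σ⁻¹.toList a).formPerm).support.card = (σ⁻¹.toList a).length := by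
      rw [List.support_formPerm_of_nodup _ hnodup hne, List.card_toFinset,
        List.dedup_eq_self.mpr hnodup]
    rw [← h1, ← hinv, Equiv.Perm.support_inv]
  obtain ⟨b, t, hbt⟩ : ∃ b t, σ⁻¹.toList a = b :: t := by
    cases h : σ⁻¹.toList a with
    | nil => rw [h] at h2len; simp at h2len
    | cons b t => exact ⟨b, t, rfl⟩
  refine ⟨((b :: t) ++ [b]).map (toggleMat r s), ?_, ?_, ?_⟩
  · simp only [List.length_map, List.length_append, List.length_cons, List.length_nil]
    have := hlen
    rw [hbt] at this
    simp only [List.length_cons] at this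
    omega
  · intro T hT
    simp only [List.mem_map] at hT
    obtain ⟨u, _, rfl⟩ := hT
    exact ⟨u, rfl⟩
  · rw [full_cycle r s b t (hbt ▸ hnodup), ← hbt, hinv]

lemma main_aux : ∀ (n : ℕ) (σ : Equiv.Perm (Fin r)), σ.support.card ≤ n →
    ∃ L : List (Matrix (Fin r) (Fin r) (ZMod s)),
      2 * L.length ≤ 3 * σ.support.card ∧
      (∀ T ∈ L, IsToggleMat r s T) ∧ L.prod = permMat r s σ := by
  intro n
  induction n with
  | zero =>
    intro σ hσ
    have : σ = 1 := by
      rw [← Equiv.Perm.support_eq_empty_iff, ← Finset.card_eq_zero]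
      omega
    subst this
    exact ⟨[], by simp, by simp, by simp [permMat_one]⟩
  | succ n IH =>
    intro σ hσ
    by_cases h1 : σ = 1
    · subst h1
      exact ⟨[], by simp, by simp, by simp [permMat_one]⟩
    · classical
      obtain ⟨a, ha⟩ : ∃ a, σ a ≠ a := by
        by_contra hc
        push_neg at hc
        exact h1 (Equiv.ext fun x => by rw [hc x]; rfl)
      set c := σ.cycleOf a with hc
      set σ' := c⁻¹ * σ with hσ'
      have hsupp : σ'.support = σ.support \ c.support := by
        ext x
        rw [Finset.mem_sdiff]
        by_cases hx : x ∈ c.support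
        · have hsc : σ.SameCycle a x := (Equiv.Perm.mem_support_cycleOf_iff.mp hx).1
          have hcx : c x = σ x := by rw [hc, Equiv.Perm.cycleOf_apply, if_pos hsc]
          have : σ' x = x := by
            rw [hσ', Equiv.Perm.mul_apply, ← hcx, Equiv.Perm.inv_def, Equiv.symm_apply_apply]
          simp [Equiv.Perm.mem_support, this, hx]
        · have hnsc : ¬ σ.SameCycle a x := by
            intro hsc
            exact hx (Equiv.Perm.mem_support_cycleOf_iff.mpr
              ⟨hsc, Equiv.Perm.mem_support.mpr ha⟩)
          have hnsx : σ x ∉ c.support := by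
            intro hsx
            exact hnsc ((Equiv.Perm.sameCycle_apply_right).mp
              (Equiv.Perm.mem_support_cycleOf_iff.mp hsx).1)
          have hcsx : c (σ x) = σ x := Equiv.Perm.notMem_support.mp hnsx
          have : σ' x = σ x := by
            rw [hσ', Equiv.Perm.mul_apply, Equiv.Perm.inv_eq_iff_eq, hcsx]
          simp [Equiv.Perm.mem_support, this, hx]
      have hkcyc : 2 ≤ c.support.card :=
        (Equiv.Perm.isCycle_cycleOf σ ha).two_le_card_support
      have hsub : c.support ⊆ σ.support := Equiv.Perm.support_cycleOf_le σ a
      have hcard : σ'.support.card = σ.support.card - c.support.card := by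
        rw [hsupp, Finset.card_sdiff_of_subset hsub]
      have hclec : c.support.card ≤ σ.support.card := Finset.card_le_card hsub
      obtain ⟨L', hL1, hL2, hL3⟩ := IH σ' (by omega)
      obtain ⟨M, hM1, hM2, hM3⟩ := exists_cycle_list r s σ a ha
      refine ⟨M ++ L', ?_, ?_, ?_⟩
      · rw [List.length_append, hM1]
        rw [← hc] at *
        omega
      · intro T hT
        rcases List.mem_append.mp hT with h | h
        · exact hM2 T h
        · exact hL2 T h
      · rw [List.prod_append, hM3, hL3, ← permMat_mul, ← hc, hσ',
          mul_inv_cancel_left]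

end ToggleAux

/-- Every `r × r` permutation matrix over `ℤ_s` is a product of at most `⌊3r/2⌋`
toggle matrices. -/
theorem permMatrix_eq_prod_toggle (r s : ℕ) (hr : 1 ≤ r) (hs : 2 ≤ s)
    (σ : Equiv.Perm (Fin r)) :
    ∃ L : List (Matrix (Fin r) (Fin r) (ZMod s)),
      L.length ≤ 3 * r / 2 ∧ (∀ T ∈ L, IsToggleMat r s T) ∧
      L.prod = Matrix.of fun i j => if σ j = i then (1 : ZMod s) else 0 := by
  obtain ⟨L, h1, h2, h3⟩ := ToggleAux.main_aux r s σ.support.card σ le_rfl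
  refine ⟨L, ?_, h2, h3⟩
  have hcard : σ.support.card ≤ r := by
    have := Finset.card_le_univ σ.support
    simpa using this
  rw [Nat.le_div_iff_mul_le (by norm_num : 0 < 2)]
  omega
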